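/- Let F_p : R → R² be a C¹ function of θ with |F_p(θ₀)| > 0 and suppose e₂ᵀ R(θ₀)ᵀ F_p(θ₀) = 0 (equilibrium condition) and e₂ᵀ R(θ)ᵀ ∂_θF_p(θ) ≡ 0. Then the derivative of the unit vector F_p/|F_p| with respect to θ vanishes at θ₀, i.e., ∂_θ [F_p/|F_p|](θ₀) = 0. Moreover, the derivative ∂_θ [e₂ᵀ R(θ)ᵀ F_p(θ)] evaluated at θ₀ equals −e₁ᵀR(θ₀)ᵀF_p(θ₀) = ±|F_p(θ₀)| ≠ 0, so by the implicit function theorem the equilibrium θ₀ is isolated. -/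

import Mathlib

open Real Matrix Topology Filter

/-- Rotation matrix by angle `θ`. -/
noncomputable def Rot (θ : ℝ) : Matrix (Fin 2) (Fin 2) ℝ :=
  !![cos θ, -sin θ; sin θ, cos θ]

lemma dot2 (θ : ℝ) (v : Fin 2 → ℝ) :
    (![0, 1] : Fin 2 → ℝ) ⬝ᵥ (Rot θ)ᵀ.mulVec v = -Real.sin θ * v 0 + Real.cos θ * v 1 := by
  simp [Rot, Matrix.mulVec, dotProduct, Fin.sum_univ_two]

lemma dot1 (θ : ℝ) (v : Fin 2 → ℝ) :
    (![1, 0] : Fin 2 → ℝ) ⬝ᵥ (Rot θ)ᵀ.mulVec v = Real.cos θ * v 0 + Real.sin θ * v 1 := by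
  simp [Rot, Matrix.mulVec, dotProduct, Fin.sum_univ_two]

lemma dotself (v : Fin 2 → ℝ) : v ⬝ᵥ v = v 0 * v 0 + v 1 * v 1 := by
  simp [dotProduct, Fin.sum_univ_two]

set_option maxHeartbeats 1000000 in
/-- Theorem 3 i)-ii): if `|F_p(θ₀)| > 0`, the equilibrium condition
`e₂ᵀR(θ₀)ᵀF_p(θ₀) = 0` holds, and `e₂ᵀR(θ)ᵀ∂_θF_p(θ) ≡ 0`, then the direction
`F_p/|F_p|` has zero derivative at `θ₀`, the derivative of the equilibrium
function at `θ₀` equals `−e₁ᵀR(θ₀)ᵀF_p(θ₀) = ±|F_p(θ₀)| ≠ 0`, and the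
equilibrium `θ₀` is isolated. -/
theorem direction_locally_constant_and_isolated
    (Fp : ℝ → Fin 2 → ℝ) (hFp : ContDiff ℝ 1 Fp) (θ₀ : ℝ)
    (hnz : 0 < Real.sqrt (Fp θ₀ ⬝ᵥ Fp θ₀))
    (heq : (![0, 1] : Fin 2 → ℝ) ⬝ᵥ (Rot θ₀)ᵀ.mulVec (Fp θ₀) = 0)
    (hker : ∀ θ, (![0, 1] : Fin 2 → ℝ) ⬝ᵥ (Rot θ)ᵀ.mulVec (deriv Fp θ) = 0) :
    deriv (fun θ => (Real.sqrt (Fp θ ⬝ᵥ Fp θ))⁻¹ • Fp θ) θ₀ = 0 ∧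
    deriv (fun θ => (![0, 1] : Fin 2 → ℝ) ⬝ᵥ (Rot θ)ᵀ.mulVec (Fp θ)) θ₀
      = - ((![1, 0] : Fin 2 → ℝ) ⬝ᵥ (Rot θ₀)ᵀ.mulVec (Fp θ₀)) ∧
    ((![1, 0] : Fin 2 → ℝ) ⬝ᵥ (Rot θ₀)ᵀ.mulVec (Fp θ₀)
        = Real.sqrt (Fp θ₀ ⬝ᵥ Fp θ₀) ∨
      (![1, 0] : Fin 2 → ℝ) ⬝ᵥ (Rot θ₀)ᵀ.mulVec (Fp θ₀)
        = - Real.sqrt (Fp θ₀ ⬝ᵥ Fp θ₀)) ∧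
    (![1, 0] : Fin 2 → ℝ) ⬝ᵥ (Rot θ₀)ᵀ.mulVec (Fp θ₀) ≠ 0 ∧
    ∃ ε > (0 : ℝ), ∀ θ, θ ≠ θ₀ → |θ - θ₀| < ε →
      (![0, 1] : Fin 2 → ℝ) ⬝ᵥ (Rot θ)ᵀ.mulVec (Fp θ) ≠ 0 := by
  have hd : Differentiable ℝ Fp := hFp.differentiable one_ne_zero
  -- component derivatives
  have hcomp : ∀ (θ : ℝ) (i : Fin 2), HasDerivAt (fun t => Fp t i) (deriv Fp θ i) θ := by
    intro θ i
    exact (ContinuousLinearMap.proj (R := ℝ) (φ := fun _ : Fin 2 => ℝ) i).hasFDerivAt.comp_hasDerivAt θ (hd θ).hasDerivAt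
  set c := Real.cos θ₀ with hc
  set s := Real.sin θ₀ with hs
  set A0 := Fp θ₀ 0 with hA0
  set A1 := Fp θ₀ 1 with hA1
  set B0 := deriv Fp θ₀ 0 with hB0
  set B1 := deriv Fp θ₀ 1 with hB1
  have hpyth : s ^ 2 + c ^ 2 = 1 := Real.sin_sq_add_cos_sq θ₀
  have heq' : -s * A0 + c * A1 = 0 := by rw [dot2] at heq; exact heq
  have hker' : -s * B0 + c * B1 = 0 := by have := hker θ₀; rw [dot2] at this; exact this
  have hcross : A0 * B1 - A1 * B0 = 0 := by
    linear_combination (-(s * B1 + c * B0)) * heq' + (s * A1 + c * A0) * hker'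
      - (A0 * B1 - A1 * B0) * hpyth
  set Q := Fp θ₀ ⬝ᵥ Fp θ₀ with hQ
  have hQ' : Q = A0 * A0 + A1 * A1 := dotself _
  have hQpos : 0 < Q := Real.sqrt_pos.mp hnz
  have hQne : Q ≠ 0 := ne_of_gt hQpos
  have hr : Real.sqrt Q ^ 2 = Q := Real.sq_sqrt hQpos.le
  have hrne : Real.sqrt Q ≠ 0 := ne_of_gt hnz
  -- derivative of θ ↦ Fp θ ⬝ᵥ Fp θ
  have hqd : HasDerivAt (fun θ => Fp θ ⬝ᵥ Fp θ) (2 * (A0 * B0 + A1 * B1)) θ₀ := by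
    have : (fun θ => Fp θ ⬝ᵥ Fp θ) = fun θ => Fp θ 0 * Fp θ 0 + Fp θ 1 * Fp θ 1 := by
      funext θ; exact dotself _
    rw [this]
    have := ((hcomp θ₀ 0).mul (hcomp θ₀ 0)).add ((hcomp θ₀ 1).mul (hcomp θ₀ 1))
    exact this.congr_deriv (by ring)
  have hsq : HasDerivAt (fun θ => Real.sqrt (Fp θ ⬝ᵥ Fp θ))
      (1 / (2 * Real.sqrt Q) * (2 * (A0 * B0 + A1 * B1))) θ₀ :=
    (Real.hasDerivAt_sqrt hQne).comp θ₀ hqd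
  have hinv : HasDerivAt (fun θ => (Real.sqrt (Fp θ ⬝ᵥ Fp θ))⁻¹)
      (-(1 / (2 * Real.sqrt Q) * (2 * (A0 * B0 + A1 * B1))) / (Real.sqrt Q) ^ 2) θ₀ :=
    hsq.inv hrne
  have hg : HasDerivAt (fun θ => (Real.sqrt (Fp θ ⬝ᵥ Fp θ))⁻¹ • Fp θ)
      ((Real.sqrt Q)⁻¹ • deriv Fp θ₀
        + (-(1 / (2 * Real.sqrt Q) * (2 * (A0 * B0 + A1 * B1))) / (Real.sqrt Q) ^ 2) • Fp θ₀) θ₀ :=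
    hinv.smul (hd θ₀).hasDerivAt
  have hgzero : (Real.sqrt Q)⁻¹ • deriv Fp θ₀
        + (-(1 / (2 * Real.sqrt Q) * (2 * (A0 * B0 + A1 * B1))) / (Real.sqrt Q) ^ 2) • Fp θ₀
        = (0 : Fin 2 → ℝ) := by
    funext i
    have hsq3 : Real.sqrt Q * Real.sqrt Q * Real.sqrt Q ≠ 0 := by positivity
    fin_cases i <;>
      simp only [Pi.add_apply, Pi.smul_apply, smul_eq_mul, Pi.zero_apply] <;>
      · show _ * _ + _ * _ = 0
        field_simp
        simp only [Fin.zero_eta, Fin.mk_one, ← hA0, ← hA1, ← hB0, ← hB1]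
        first
        | linear_combination B0 * hr + B0 * hQ' - A1 * hcross
        | linear_combination B1 * hr + B1 * hQ' + A0 * hcross
  -- part 2: derivative of the equilibrium function
  have hf : HasDerivAt (fun θ => (![0, 1] : Fin 2 → ℝ) ⬝ᵥ (Rot θ)ᵀ.mulVec (Fp θ))
      (-(c * A0 + s * A1)) θ₀ := by
    have h0 : (fun θ => (![0, 1] : Fin 2 → ℝ) ⬝ᵥ (Rot θ)ᵀ.mulVec (Fp θ))
        = fun θ => -Real.sin θ * Fp θ 0 + Real.cos θ * Fp θ 1 := by
      funext θ; exact dot2 θ _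
    rw [h0]
    have h1 := (((Real.hasDerivAt_sin θ₀).neg).mul (hcomp θ₀ 0)).add
      ((Real.hasDerivAt_cos θ₀).mul (hcomp θ₀ 1))
    refine h1.congr_deriv ?_
    rw [Pi.neg_apply, ← hc, ← hs, ← hA0, ← hA1, ← hB0, ← hB1]
    linear_combination hker'
  have ha : (c * A0 + s * A1) ^ 2 = Real.sqrt Q ^ 2 := by
    rw [hr, hQ']
    linear_combination (-(-s * A0 + c * A1)) * heq' + (A0 * A0 + A1 * A1) * hpyth
  have hane : c * A0 + s * A1 ≠ 0 := by
    intro h0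
    rw [h0] at ha
    nlinarith [hnz]
  refine ⟨?_, ?_, ?_, ?_, ?_⟩
  · rw [hg.deriv, hgzero]
  · rw [hf.deriv, dot1]
  · rw [dot1]
    have : (c * A0 + s * A1 - Real.sqrt Q) * (c * A0 + s * A1 + Real.sqrt Q) = 0 := by
      nlinarith [ha]
    rcases mul_eq_zero.mp this with h | h
    · left; linarith
    · right; linarith
  · rw [dot1]; exact hane
  · -- isolation
    have hane' : -(c * A0 + s * A1) ≠ 0 := neg_ne_zero.mpr hane
    have hslope := hasDerivAt_iff_tendsto_slope.mp hf
    have hev : ∀ᶠ θ in 𝓝[≠] θ₀,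
        slope (fun θ => (![0, 1] : Fin 2 → ℝ) ⬝ᵥ (Rot θ)ᵀ.mulVec (Fp θ)) θ₀ θ ≠ 0 :=
      hslope.eventually_ne hane'
    rw [eventually_nhdsWithin_iff, Metric.eventually_nhds_iff] at hev
    obtain ⟨ε, hε, hball⟩ := hev
    refine ⟨ε, hε, fun θ hne hdist h0 => ?_⟩
    have := hball (y := θ) (by simpa [Real.dist_eq] using hdist) hne
    rw [slope_def_field] at this
    apply this
    rw [h0, heq]
    simp
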